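/- The number of edges added by the ZF-based augmentation algorithm depends only on n, the number of leaders m, and the size of the derived set |Δ|, and not otherwise on the topology of the input graph: the augmented graph always has exactly |Δ|(|Δ|+1)/2 − m(m+1)/2 + (m+n−|Δ|)n − n edges, provided the input graph's edge set is contained in this count's implied edge set (i.e., the algorithm's output edge count is independent of which edges G initially has, given the forcing order exists). -/

import Mathlib

variable {V : Type*} [Fintype V] [DecidableEq V]

/-- The set of white (i.e., not in `B`) in-neighbors of `v` in the digraph with edge set `E`. -/
def whiteIn (E : Finset (V × V)) (B : Finset V) (v : V) : Finset V :=
  Finset.univ.filter (fun u => (u, v) ∈ E ∧ u ∉ B)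

/-- Black node `u` forces the white node `v`: `v` is the unique white in-neighbor of `u`. -/
def Forces (E : Finset (V × V)) (B : Finset V) (u v : V) : Prop :=
  u ∈ B ∧ whiteIn E B u = {v}

/-- One step of the zero forcing process. -/
def ZFStep (E : Finset (V × V)) (B B' : Finset V) : Prop :=
  ∃ u v, Forces E B u v ∧ B' = insert v B

/-- No further color change is possible. -/
def Stalled (E : Finset (V × V)) (B : Finset V) : Prop :=
  ∀ u v, ¬ Forces E B u v

/-- `B` is a derived set of input set `V'`: obtained from `V'` by zero forcing steps,
with no further step possible. -/
def IsDerived (E : Finset (V × V)) (V' B : Finset V) : Prop :=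
  Relation.ReflTransGen (ZFStep E) V' B ∧ Stalled E B

/-- `ValidFrom E B L`: the list `L` of (forcing node, forced node) pairs is a valid
zero forcing run starting from black set `B`. -/
def ValidFrom (E : Finset (V × V)) : Finset V → List (V × V) → Prop
  | _, [] => True
  | B, (u, v) :: rest => Forces E B u v ∧ ValidFrom E (insert v B) rest

/-- Black set at the end of the run `L` started from black set `B`. -/
def finalBlack : Finset V → List (V × V) → Finset V
  | B, [] => B
  | B, (_, v) :: rest => finalBlack (insert v B) rest

/-- Edges added inside the loop of the ZF-based augmentation algorithm: each time `u`
forces `v`, after coloring `v` black, add edges to `u` from all currently black nodes. -/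
def augEdges : Finset V → List (V × V) → Finset (V × V)
  | _, [] => (∅ : Finset (V × V))
  | B, (u, v) :: rest =>
      ((insert v B).erase u).image (fun w => (w, u)) ∪ augEdges (insert v B) rest

/-- The edge set returned by the ZF-based edge augmentation algorithm: the original edges,
the edges added during the forcing loop, and all incoming edges to every node that was never
used as a forcing node. -/
def zfAugment (E : Finset (V × V)) (Vl : Finset V) (L : List (V × V)) : Finset (V × V) :=
  E ∪ augEdges Vl L ∪
    Finset.univ.filter (fun p : V × V => p.1 ≠ p.2 ∧ p.2 ∉ (L.map Prod.fst).toFinset)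

lemma whiteIn_mono {E : Finset (V × V)} {B B' : Finset V} (h : B ⊆ B') (u : V) :
    whiteIn E B' u ⊆ whiteIn E B u := by
  intro x hx
  simp only [whiteIn, Finset.mem_filter, Finset.mem_univ, true_and] at *
  exact ⟨hx.1, fun hc => hx.2 (h hc)⟩

lemma not_fst_of_whiteIn_empty {E : Finset (V × V)} :
    ∀ (L : List (V × V)) (B : Finset V), ValidFrom E B L → ∀ u, whiteIn E B u = ∅ →
      u ∉ L.map Prod.fst
  | [], _, _, _, _ => by simp
  | (a, v) :: rest, B, hV, u, hw => by
      obtain ⟨hf, hrest⟩ := hV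
      simp only [List.map_cons, List.mem_cons]
      rintro (rfl | hmem)
      · rw [hf.2] at hw; simp at hw
      · have hsub := whiteIn_mono (E := E) (Finset.subset_insert v B) u
        rw [hw] at hsub
        exact not_fst_of_whiteIn_empty rest (insert v B) hrest u
          (Finset.subset_empty.mp hsub) hmem

lemma whiteIn_insert_empty {E : Finset (V × V)} {B : Finset V} {u v : V}
    (hf : Forces E B u v) : whiteIn E (insert v B) u = ∅ := by
  apply Finset.subset_empty.mp
  intro x hx
  have hx' := whiteIn_mono (E := E) (Finset.subset_insert v B) u hx
  rw [hf.2] at hx'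
  simp only [Finset.mem_singleton] at hx'
  subst hx'
  simp [whiteIn] at hx

lemma aug_snd_mem : ∀ (L : List (V × V)) (B : Finset V) (p : V × V),
    p ∈ augEdges B L → p.2 ∈ L.map Prod.fst
  | [], B, p, h => by simp [augEdges] at h
  | (u, v) :: rest, B, p, h => by
      simp only [augEdges, Finset.mem_union, Finset.mem_image] at h
      rcases h with ⟨w, _, rfl⟩ | h
      · simp
      · simp only [List.map_cons, List.mem_cons]
        exact Or.inr (aug_snd_mem rest _ p h)

lemma mem_aug_of_mem_E {E : Finset (V × V)} : ∀ (L : List (V × V)) (B : Finset V),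
    ValidFrom E B L →
    ∀ a b, (a, b) ∈ E → a ≠ b → b ∈ L.map Prod.fst → (a, b) ∈ augEdges B L
  | [], _, _, _, _, _, _, h => by simp at h
  | (u, v) :: rest, B, ⟨hf, hrest⟩, a, b, hab, hne, hmem => by
      simp only [List.map_cons, List.mem_cons] at hmem
      simp only [augEdges, Finset.mem_union]
      rcases hmem with rfl | hmem
      · left
        refine Finset.mem_image.mpr ⟨a, ?_, rfl⟩
        have ha : a ∈ insert v B := by
          by_cases hB : a ∈ B
          · exact Finset.mem_insert_of_mem hB
          · have hwh : a ∈ whiteIn E B b := by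
              simp [whiteIn, hab, hB]
            rw [hf.2] at hwh
            simp only [Finset.mem_singleton] at hwh
            simp [hwh]
        exact Finset.mem_erase.mpr ⟨hne, ha⟩
      · exact Or.inr (mem_aug_of_mem_E rest _ hrest a b hab hne hmem)

lemma nodup_fst {E : Finset (V × V)} : ∀ (L : List (V × V)) (B : Finset V),
    ValidFrom E B L → (L.map Prod.fst).Nodup
  | [], _, _ => by simp
  | (u, v) :: rest, B, ⟨hf, hrest⟩ => by
      simp only [List.map_cons, List.nodup_cons]
      exact ⟨not_fst_of_whiteIn_empty rest _ hrest u (whiteIn_insert_empty hf),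
        nodup_fst rest _ hrest⟩

lemma forced_not_mem {E : Finset (V × V)} {B : Finset V} {u v : V}
    (hf : Forces E B u v) : v ∉ B := by
  have : v ∈ whiteIn E B u := by rw [hf.2]; simp
  simp only [whiteIn, Finset.mem_filter] at this
  exact this.2.2

lemma final_card {E : Finset (V × V)} : ∀ (L : List (V × V)) (B : Finset V),
    ValidFrom E B L → (finalBlack B L).card = B.card + L.length
  | [], B, _ => by simp [finalBlack]
  | (u, v) :: rest, B, ⟨hf, hrest⟩ => by
      simp only [finalBlack, List.length_cons]
      rw [final_card rest _ hrest, Finset.card_insert_of_notMem (forced_not_mem hf)]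
      omega

lemma aug_card {E : Finset (V × V)} : ∀ (L : List (V × V)) (B : Finset V),
    ValidFrom E B L →
    2 * ((augEdges B L).card : ℤ) + (B.card : ℤ) * ((B.card : ℤ) - 1)
      = ((finalBlack B L).card : ℤ) * (((finalBlack B L).card : ℤ) - 1)
  | [], B, _ => by simp [augEdges, finalBlack]
  | (u, v) :: rest, B, ⟨hf, hrest⟩ => by
      have hvB : v ∉ B := forced_not_mem hf
      have huB : u ∈ insert v B := Finset.mem_insert_of_mem hf.1
      have hu : u ∉ rest.map Prod.fst :=
        not_fst_of_whiteIn_empty rest _ hrest u (whiteIn_insert_empty hf)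
      have hdisj : Disjoint (((insert v B).erase u).image (fun w => (w, u)))
          (augEdges (insert v B) rest) := by
        rw [Finset.disjoint_left]
        rintro p hp hp'
        obtain ⟨w, _, rfl⟩ := Finset.mem_image.mp hp
        exact hu (aug_snd_mem rest _ _ hp')
      have hcard1 : (((insert v B).erase u).image (fun w => (w, u))).card = B.card := by
        rw [Finset.card_image_of_injOn (by intro x _ y _ h; simpa using h),
          Finset.card_erase_of_mem huB,
          Finset.card_insert_of_notMem hvB]
        omega
      have IH := aug_card rest (insert v B) hrest
      rw [Finset.card_insert_of_notMem hvB] at IH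
      simp only [augEdges, finalBlack]
      rw [Finset.card_union_of_disjoint hdisj, hcard1]
      push_cast at IH ⊢
      linarith


lemma F_card (S : Finset V) :
    (Finset.univ.filter (fun p : V × V => p.1 ≠ p.2 ∧ p.2 ∉ S)).card
      = (Fintype.card V - S.card) * (Fintype.card V - 1) := by
  have hFbi : Finset.univ.filter (fun p : V × V => p.1 ≠ p.2 ∧ p.2 ∉ S)
      = (Finset.univ \ S).biUnion
        (fun b => (Finset.univ.erase b).image (fun a => (a, b))) := by
    ext ⟨a, b⟩
    simp only [Finset.mem_filter, Finset.mem_univ, true_and, Finset.mem_biUnion,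
      Finset.mem_sdiff, Finset.mem_image, Finset.mem_erase, Prod.mk.injEq]
    constructor
    · rintro ⟨hne, hb⟩
      exact ⟨b, hb, a, ⟨hne, trivial⟩, rfl, rfl⟩
    · rintro ⟨b', hb', a', ⟨hne, -⟩, rfl, rfl⟩
      exact ⟨hne, hb'⟩
  rw [hFbi, Finset.card_biUnion]
  · rw [Finset.sum_congr rfl (fun b _ => ?_), Finset.sum_const, smul_eq_mul,
      Finset.card_sdiff_of_subset (Finset.subset_univ S), Finset.card_univ]
    rw [Finset.card_image_of_injOn (by intro x _ y _ h; simpa using h),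
      Finset.card_erase_of_mem (Finset.mem_univ b), Finset.card_univ]
  · intro x _ y _ hxy
    rw [Function.onFun, Finset.disjoint_left]
    rintro p hp hp'
    obtain ⟨a, -, rfl⟩ := Finset.mem_image.mp hp
    obtain ⟨a', -, h⟩ := Finset.mem_image.mp hp'
    exact hxy (by cases h; rfl)

/-- The number of edges of the graph produced by the ZF-based augmentation algorithm
depends only on `n`, the number of leaders `m`, and the size `|Δ|` of the derived set:
it always equals `|Δ|(|Δ|+1)/2 − m(m+1)/2 + (m+n−|Δ|)n − n`, independently of the
topology of the input graph. -/
theorem zfAugment_card_exact (E : Finset (V × V)) (Vl : Finset V) (L : List (V × V))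
    (hloop : ∀ v : V, (v, v) ∉ E)
    (hvalid : ValidFrom E Vl L) (hstall : Stalled E (finalBlack Vl L)) :
    let n : ℤ := Fintype.card V
    let m : ℤ := Vl.card
    let D : ℤ := (finalBlack Vl L).card
    ((zfAugment E Vl L).card : ℤ) =
      D * (D + 1) / 2 - m * (m + 1) / 2 + (m + n - D) * n - n := by
  intro n m D
  classical
  have hunion : zfAugment E Vl L = augEdges Vl L ∪
      Finset.univ.filter
        (fun p : V × V => p.1 ≠ p.2 ∧ p.2 ∉ (L.map Prod.fst).toFinset) := by
    unfold zfAugment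
    apply Finset.Subset.antisymm
    · intro p hp
      rcases Finset.mem_union.mp hp with hp | hp
      · rcases Finset.mem_union.mp hp with hp | hp
        · obtain ⟨a, b⟩ := p
          have hne : a ≠ b := by rintro rfl; exact hloop a hp
          by_cases hb : b ∈ L.map Prod.fst
          · exact Finset.mem_union_left _ (mem_aug_of_mem_E L Vl hvalid a b hp hne hb)
          · refine Finset.mem_union_right _ ?_
            simp only [Finset.mem_filter, Finset.mem_univ, true_and, List.mem_toFinset]
            exact ⟨hne, hb⟩
        · exact Finset.mem_union_left _ hp
      · exact Finset.mem_union_right _ hp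
    · intro p hp
      rcases Finset.mem_union.mp hp with hp | hp
      · exact Finset.mem_union_left _ (Finset.mem_union_right _ hp)
      · exact Finset.mem_union_right _ hp
  have hdisj : Disjoint (augEdges Vl L)
      (Finset.univ.filter
        (fun p : V × V => p.1 ≠ p.2 ∧ p.2 ∉ (L.map Prod.fst).toFinset)) := by
    rw [Finset.disjoint_left]
    intro p hp hpF
    have hsnd := aug_snd_mem L Vl p hp
    simp only [Finset.mem_filter, List.mem_toFinset] at hpF
    exact hpF.2.2 hsnd
  have hFcard := F_card (L.map Prod.fst).toFinset
  have hScard : (L.map Prod.fst).toFinset.card = L.length := by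
    rw [List.toFinset_card_of_nodup (nodup_fst L Vl hvalid), List.length_map]
  have hfin : (finalBlack Vl L).card = Vl.card + L.length := final_card L Vl hvalid
  have haug := aug_card L Vl hvalid
  have hcard : ((zfAugment E Vl L).card : ℤ) = (augEdges Vl L).card +
      ((Finset.univ.filter
        (fun p : V × V => p.1 ≠ p.2 ∧ p.2 ∉ (L.map Prod.fst).toFinset)).card : ℤ) := by
    rw [hunion, Finset.card_union_of_disjoint hdisj]; push_cast; ring
  have hle : (L.map Prod.fst).toFinset.card ≤ Fintype.card V :=
    Finset.card_le_univ _
  have hlen : L.length ≤ Fintype.card V := hScard ▸ hle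
  rw [hScard] at hFcard
  have hFZ : (((Finset.univ.filter
      (fun p : V × V => p.1 ≠ p.2 ∧ p.2 ∉ (L.map Prod.fst).toFinset)).card : ℤ))
      = (n - L.length) * (n - 1) := by
    rw [hFcard]
    rcases Nat.eq_zero_or_pos (Fintype.card V) with h0 | h0
    · have : L.length = 0 := by omega
      simp [n, h0, this]
    · rw [Nat.cast_mul, Nat.cast_sub hlen, Nat.cast_sub h0]
      push_cast
      simp only [n]
  have hDZ : D = m + L.length := by simp only [D, m, hfin]; push_cast; ring
  have h2D : (2 : ℤ) ∣ D * (D + 1) := (Int.even_mul_succ_self D).two_dvd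
  have h2m : (2 : ℤ) ∣ m * (m + 1) := (Int.even_mul_succ_self m).two_dvd
  obtain ⟨a, ha⟩ := h2D
  obtain ⟨b, hb⟩ := h2m
  have hgoal : 2 * ((zfAugment E Vl L).card : ℤ) =
      2 * (D * (D + 1) / 2 - m * (m + 1) / 2 + (m + n - D) * n - n) := by
    rw [ha, hb, Int.mul_ediv_cancel_left a two_ne_zero, Int.mul_ediv_cancel_left b two_ne_zero]
    rw [hcard, hFZ]
    nlinarith [haug, hDZ, ha, hb]
  omega
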